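/- The ordinary (unrestricted) right rule for intuitionistic implication is admissible in G(FOC+J) when the context consists only of purely intuitionistic formulas: if Γ ⊆ Form_J and Γ, A ⇒ B is derivable in G(FOC+J), then Γ ⇒ A →ᵢ B is derivable in G(FOC+J). -/

import Mathlib

/-- Terms: variables (named by naturals) and constant symbols. -/
inductive Tm : Type
| var : ℕ → Tm
| const : ℕ → Tm
deriving DecidableEq

/-- Formulas of the combined language: atoms, ⊥, ∧, ∨, intuitionistic and
classical implication, intuitionistic and classical universal quantifier,
and the existential quantifier. -/
inductive Fm : Type
| atom : ℕ → List Tm → Fm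
| bot : Fm
| and : Fm → Fm → Fm
| or : Fm → Fm → Fm
| impI : Fm → Fm → Fm
| impC : Fm → Fm → Fm
| allI : ℕ → Fm → Fm
| allC : ℕ → Fm → Fm
| ex : ℕ → Fm → Fm
deriving DecidableEq

def Fm.top : Fm := .impI .bot .bot
def Fm.negC (A : Fm) : Fm := .impC A .bot
def Fm.negI (A : Fm) : Fm := .impI A .bot

def Tm.fv : Tm → Set ℕ
| .var x => {x}
| .const _ => ∅

/-- Free variables of a formula. -/
def Fm.fv : Fm → Set ℕ
| .atom _ ts => {x | ∃ t ∈ ts, x ∈ t.fv}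
| .bot => ∅
| .and A B => A.fv ∪ B.fv
| .or A B => A.fv ∪ B.fv
| .impI A B => A.fv ∪ B.fv
| .impC A B => A.fv ∪ B.fv
| .allI x A => A.fv \ {x}
| .allC x A => A.fv \ {x}
| .ex x A => A.fv \ {x}

/-- Bound variables of a formula. -/
def Fm.bv : Fm → Set ℕ
| .atom _ _ => ∅
| .bot => ∅
| .and A B => A.bv ∪ B.bv
| .or A B => A.bv ∪ B.bv
| .impI A B => A.bv ∪ B.bv
| .impC A B => A.bv ∪ B.bv
| .allI x A => insert x A.bv
| .allC x A => insert x A.bv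
| .ex x A => insert x A.bv

/-- All variables (free and bound) of a formula. -/
def Fm.vars : Fm → Set ℕ
| .atom _ ts => {x | ∃ t ∈ ts, x ∈ t.fv}
| .bot => ∅
| .and A B => A.vars ∪ B.vars
| .or A B => A.vars ∪ B.vars
| .impI A B => A.vars ∪ B.vars
| .impC A B => A.vars ∪ B.vars
| .allI x A => insert x A.vars
| .allC x A => insert x A.vars
| .ex x A => insert x A.vars

def Tm.subst (x : ℕ) (u : Tm) : Tm → Tm
| .var y => if y = x then u else .var y
| .const c => .const c

/-- Substitution of term `u` for variable `x` (under the standing assumption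
that bound and free variables are disjoint, this is clash-avoiding). -/
def Fm.subst : Fm → ℕ → Tm → Fm
| .atom P ts, x, u => .atom P (ts.map (Tm.subst x u))
| .bot, _, _ => .bot
| .and A B, x, u => .and (A.subst x u) (B.subst x u)
| .or A B, x, u => .or (A.subst x u) (B.subst x u)
| .impI A B, x, u => .impI (A.subst x u) (B.subst x u)
| .impC A B, x, u => .impC (A.subst x u) (B.subst x u)
| .allI y A, x, u => .allI y (if y = x then A else A.subst x u)
| .allC y A, x, u => .allC y (if y = x then A else A.subst x u)
| .ex y A, x, u => .ex y (if y = x then A else A.subst x u)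

/-- Persistent formulas: atoms, →ᵢ-formulas and ∀ᵢ-formulas. -/
def Fm.Persistent : Fm → Prop
| .atom _ _ => True
| .impI _ _ => True
| .allI _ _ => True
| _ => False

/-- Purely intuitionistic formulas (no →_c, no ∀_c). -/
def Fm.IsJ : Fm → Prop
| .atom _ _ => True
| .bot => True
| .and A B => A.IsJ ∧ B.IsJ
| .or A B => A.IsJ ∧ B.IsJ
| .impI A B => A.IsJ ∧ B.IsJ
| .impC _ _ => False
| .allI _ A => A.IsJ
| .allC _ _ => False
| .ex _ A => A.IsJ

/-- Purely classical formulas (no →ᵢ, no ∀ᵢ). -/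
def Fm.IsC : Fm → Prop
| .atom _ _ => True
| .bot => True
| .and A B => A.IsC ∧ B.IsC
| .or A B => A.IsC ∧ B.IsC
| .impI _ _ => False
| .impC A B => A.IsC ∧ B.IsC
| .allI _ _ => False
| .allC _ A => A.IsC
| .ex _ A => A.IsC

/-- A raw Kripke structure for the combined first-order language. -/
structure KModel (U : Type) where
  W : Type
  R : W → W → Prop
  D : W → Set U
  cI : ℕ → U
  V : ℕ → W → Set (List U)

/-- The conditions making a raw structure an intuitionistic Kripke model:
`R` is a preorder, domains are nonempty, monotone, with nonempty
intersection, constants are rigid (interpreted in every domain), and the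
predicate valuation is monotone (hereditary) along `R`. -/
structure KModel.IsKripke {U : Type} (M : KModel U) : Prop where
  wNonempty : Nonempty M.W
  refl : ∀ w, M.R w w
  trans : ∀ {w v u}, M.R w v → M.R v u → M.R w u
  dNonempty : ∀ w, (M.D w).Nonempty
  dMono : ∀ {w v}, M.R w v → M.D w ⊆ M.D v
  dInter : (⋂ w, M.D w).Nonempty
  cMem : ∀ c w, M.cI c ∈ M.D w
  vMono : ∀ P {w v}, M.R w v → M.V P w ⊆ M.V P v

def Tm.val {U : Type} (M : KModel U) (g : ℕ → U) : Tm → U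
| .var x => g x
| .const c => M.cI c

/-- Satisfaction of a formula at a world under an assignment. -/
def Fm.Sat {U : Type} (M : KModel U) : Fm → M.W → (ℕ → U) → Prop
| .atom P ts, w, g => ts.map (Tm.val M g) ∈ M.V P w
| .bot, _, _ => False
| .and A B, w, g => A.Sat M w g ∧ B.Sat M w g
| .or A B, w, g => A.Sat M w g ∨ B.Sat M w g
| .impI A B, w, g => ∀ v, M.R w v → A.Sat M v g → B.Sat M v g
| .impC A B, w, g => A.Sat M w g → B.Sat M w g
| .allI x A, w, g => ∀ v, M.R w v → ∀ d ∈ M.D v, A.Sat M v (Function.update g x d)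
| .allC x A, w, g => ∀ d ∈ M.D w, A.Sat M w (Function.update g x d)
| .ex x A, w, g => ∃ d ∈ M.D w, A.Sat M w (Function.update g x d)

/-- Multi-succedent semantic consequence: at every world of every Kripke
model, under any assignment into the domain, if all of `Γ` holds then some
member of `Δ` holds. -/
def Conseq (Γ Δ : List Fm) : Prop :=
  ∀ (U : Type) (M : KModel U), M.IsKripke → ∀ (w : M.W) (g : ℕ → U),
    (∀ x, g x ∈ M.D w) → (∀ A ∈ Γ, A.Sat M w g) → ∃ B ∈ Δ, B.Sat M w g

/-- The sequent calculus G(FOC+J). -/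
inductive Der : List Fm → List Fm → Prop
| id (A : Fm) : Der [A] [A]
| botL : Der [.bot] []
| perm {Γ Γ' Δ Δ'} : Γ.Perm Γ' → Δ.Perm Δ' → Der Γ Δ → Der Γ' Δ'
| wL {Γ Δ} (A) : Der Γ Δ → Der (A :: Γ) Δ
| wR {Γ Δ} (A) : Der Γ Δ → Der Γ (A :: Δ)
| cL {Γ Δ A} : Der (A :: A :: Γ) Δ → Der (A :: Γ) Δ
| cR {Γ Δ A} : Der Γ (A :: A :: Δ) → Der Γ (A :: Δ)
| cut {Γ Δ P S A} : Der Γ (A :: Δ) → Der (A :: P) S → Der (Γ ++ P) (Δ ++ S)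
| impIR {Θ A B} : (∀ C ∈ Θ, Fm.Persistent C) →
    Der (A :: Θ) [B] → Der Θ [.impI A B]
| impIL {Γ₁ Γ₂ Δ₁ Δ₂ A B} : Der Γ₁ (A :: Δ₁) → Der (B :: Γ₂) Δ₂ →
    Der (.impI A B :: (Γ₁ ++ Γ₂)) (Δ₁ ++ Δ₂)
| impCR {Γ Δ A B} : Der (A :: Γ) (B :: Δ) → Der Γ (.impC A B :: Δ)
| impCL {Γ₁ Γ₂ Δ₁ Δ₂ A B} : Der Γ₁ (A :: Δ₁) → Der (B :: Γ₂) Δ₂ →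
    Der (.impC A B :: (Γ₁ ++ Γ₂)) (Δ₁ ++ Δ₂)
| andR {Γ Δ A B} : Der Γ (A :: Δ) → Der Γ (B :: Δ) → Der Γ (.and A B :: Δ)
| andL1 {Γ Δ A B} : Der (A :: Γ) Δ → Der (.and A B :: Γ) Δ
| andL2 {Γ Δ A B} : Der (B :: Γ) Δ → Der (.and A B :: Γ) Δ
| orR1 {Γ Δ A B} : Der Γ (A :: Δ) → Der Γ (.or A B :: Δ)
| orR2 {Γ Δ A B} : Der Γ (B :: Δ) → Der Γ (.or A B :: Δ)
| orL {Γ Δ A B} : Der (A :: Γ) Δ → Der (B :: Γ) Δ → Der (.or A B :: Γ) Δ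
| allIR {Θ x z A} : (∀ C ∈ Θ, Fm.Persistent C) →
    (∀ C ∈ Θ, z ∉ Fm.fv C) → z ∉ Fm.fv (.allI x A) → z ∉ Fm.bv A →
    Der Θ [A.subst x (.var z)] → Der Θ [.allI x A]
| allIL {Γ Δ x A} (t : Tm) : (∀ y ∈ t.fv, y ∉ Fm.bv A) →
    Der (A.subst x t :: Γ) Δ → Der (.allI x A :: Γ) Δ
| allCR {Γ Δ x z A} : (∀ C ∈ Γ, z ∉ Fm.fv C) → (∀ C ∈ Δ, z ∉ Fm.fv C) →
    z ∉ Fm.fv (.allC x A) → z ∉ Fm.bv A →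
    Der Γ (A.subst x (.var z) :: Δ) → Der Γ (.allC x A :: Δ)
| allCL {Γ Δ x A} (t : Tm) : (∀ y ∈ t.fv, y ∉ Fm.bv A) →
    Der (A.subst x t :: Γ) Δ → Der (.allC x A :: Γ) Δ
| exR {Γ Δ x A} (t : Tm) : (∀ y ∈ t.fv, y ∉ Fm.bv A) →
    Der Γ (A.subst x t :: Δ) → Der Γ (.ex x A :: Δ)
| exL {Γ Δ x z A} : (∀ C ∈ Γ, z ∉ Fm.fv C) → (∀ C ∈ Δ, z ∉ Fm.fv C) →
    z ∉ Fm.fv (.ex x A) → z ∉ Fm.bv A →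
    Der (A.subst x (.var z) :: Γ) Δ → Der (.ex x A :: Γ) Δ

/-! ### Auxiliary material for Statement 9 -/

def Fm.size : Fm → ℕ
| .atom _ _ => 0
| .bot => 0
| .and A B => A.size + B.size + 1
| .or A B => A.size + B.size + 1
| .impI A B => A.size + B.size + 1
| .impC A B => A.size + B.size + 1
| .allI _ A => A.size + 1
| .allC _ A => A.size + 1
| .ex _ A => A.size + 1

theorem Fm.size_subst (A : Fm) (x : ℕ) (u : Tm) :
    (A.subst x u).size = A.size := by
  induction A <;> simp [Fm.subst, Fm.size, *] <;> split <;> simp [Fm.size, *]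

theorem Fm.IsJ.subst {A : Fm} (h : A.IsJ) (x : ℕ) (u : Tm) :
    (A.subst x u).IsJ := by
  induction A <;> simp_all [Fm.subst, Fm.IsJ] <;> split <;> simp_all [Fm.IsJ]

def Tm.vbd : Tm → ℕ
| .var x => x + 1
| .const _ => 0

def Fm.vbd : Fm → ℕ
| .atom _ ts => (ts.map Tm.vbd).foldr max 0
| .bot => 0
| .and A B => max A.vbd B.vbd
| .or A B => max A.vbd B.vbd
| .impI A B => max A.vbd B.vbd
| .impC A B => max A.vbd B.vbd
| .allI x A => max (x + 1) A.vbd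
| .allC x A => max (x + 1) A.vbd
| .ex x A => max (x + 1) A.vbd

theorem le_foldr_max {a : ℕ} : ∀ {l : List ℕ}, a ∈ l → a ≤ l.foldr max 0 := by
  intro l
  induction l with
  | nil => simp
  | cons b l ih =>
    intro h
    rcases List.mem_cons.1 h with h | h
    · subst h; exact le_max_left _ _
    · exact le_trans (ih h) (le_max_right _ _)

theorem Fm.lt_vbd_of_mem_vars : ∀ (A : Fm) {y : ℕ}, y ∈ A.vars → y < A.vbd := by
  intro A
  induction A with
  | atom P ts =>
    intro y hy
    obtain ⟨t, ht, hyt⟩ := hy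
    cases t with
    | var w =>
      simp [Tm.fv] at hyt
      subst hyt
      have hm : Tm.vbd (.var y) ∈ ts.map Tm.vbd := List.mem_map_of_mem ht
      exact lt_of_lt_of_le (Nat.lt_succ_self y) (le_foldr_max hm)
    | const c => simp [Tm.fv] at hyt
  | bot => intro y hy; simp [Fm.vars] at hy
  | and A B ihA ihB =>
    intro y hy
    rcases hy with hy | hy
    · exact lt_of_lt_of_le (ihA hy) (le_max_left _ _)
    · exact lt_of_lt_of_le (ihB hy) (le_max_right _ _)
  | or A B ihA ihB =>
    intro y hy
    rcases hy with hy | hy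
    · exact lt_of_lt_of_le (ihA hy) (le_max_left _ _)
    · exact lt_of_lt_of_le (ihB hy) (le_max_right _ _)
  | impI A B ihA ihB =>
    intro y hy
    rcases hy with hy | hy
    · exact lt_of_lt_of_le (ihA hy) (le_max_left _ _)
    · exact lt_of_lt_of_le (ihB hy) (le_max_right _ _)
  | impC A B ihA ihB =>
    intro y hy
    rcases hy with hy | hy
    · exact lt_of_lt_of_le (ihA hy) (le_max_left _ _)
    · exact lt_of_lt_of_le (ihB hy) (le_max_right _ _)
  | allI x A ihA =>
    intro y hy
    rcases hy with hy | hy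
    · subst hy; exact lt_of_lt_of_le (Nat.lt_succ_self _) (le_max_left _ _)
    · exact lt_of_lt_of_le (ihA hy) (le_max_right _ _)
  | allC x A ihA =>
    intro y hy
    rcases hy with hy | hy
    · subst hy; exact lt_of_lt_of_le (Nat.lt_succ_self _) (le_max_left _ _)
    · exact lt_of_lt_of_le (ihA hy) (le_max_right _ _)
  | ex x A ihA =>
    intro y hy
    rcases hy with hy | hy
    · subst hy; exact lt_of_lt_of_le (Nat.lt_succ_self _) (le_max_left _ _)
    · exact lt_of_lt_of_le (ihA hy) (le_max_right _ _)

theorem Fm.fv_subset_vars : ∀ (A : Fm), A.fv ⊆ A.vars := by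
  intro A
  induction A with
  | atom P ts => exact fun y hy => hy
  | bot => exact fun y hy => hy
  | and A B ihA ihB => exact Set.union_subset_union ihA ihB
  | or A B ihA ihB => exact Set.union_subset_union ihA ihB
  | impI A B ihA ihB => exact Set.union_subset_union ihA ihB
  | impC A B ihA ihB => exact Set.union_subset_union ihA ihB
  | allI x A ihA => exact fun y hy => Set.mem_insert_iff.2 (Or.inr (ihA hy.1))
  | allC x A ihA => exact fun y hy => Set.mem_insert_iff.2 (Or.inr (ihA hy.1))
  | ex x A ihA => exact fun y hy => Set.mem_insert_iff.2 (Or.inr (ihA hy.1))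

theorem Fm.bv_subset_vars : ∀ (A : Fm), A.bv ⊆ A.vars := by
  intro A
  induction A with
  | atom P ts => exact fun y hy => hy.elim
  | bot => exact fun y hy => hy
  | and A B ihA ihB => exact Set.union_subset_union ihA ihB
  | or A B ihA ihB => exact Set.union_subset_union ihA ihB
  | impI A B ihA ihB => exact Set.union_subset_union ihA ihB
  | impC A B ihA ihB => exact Set.union_subset_union ihA ihB
  | allI x A ihA => exact Set.insert_subset_insert ihA
  | allC x A ihA => exact Set.insert_subset_insert ihA
  | ex x A ihA => exact Set.insert_subset_insert ihA

theorem Fm.notMem_fv_of_vbd_le {A : Fm} {z : ℕ} (h : A.vbd ≤ z) : z ∉ A.fv :=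
  fun hz => absurd (Fm.lt_vbd_of_mem_vars A (Fm.fv_subset_vars A hz)) (not_lt.2 h)

theorem Fm.notMem_bv_of_vbd_le {A : Fm} {z : ℕ} (h : A.vbd ≤ z) : z ∉ A.bv :=
  fun hz => absurd (Fm.lt_vbd_of_mem_vars A (Fm.bv_subset_vars A hz)) (not_lt.2 h)

/-- Weakening a whole list on the left. -/
theorem Der.wLs {Γ Δ : List Fm} (Ξ : List Fm) (h : Der Γ Δ) : Der (Ξ ++ Γ) Δ := by
  induction Ξ with
  | nil => exact h
  | cons a l ih => exact Der.wL a ih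

theorem Der.pairAnd (D E : Fm) : Der [D, E] [.and D E] := by
  have h1 : Der [D, E] [D] :=
    Der.perm (List.Perm.swap D E []) (List.Perm.refl _) (Der.wL E (Der.id D))
  have h2 : Der [D, E] [E] := Der.wL D (Der.id E)
  exact Der.andR h1 h2

/-- Main auxiliary lemma: induction on the total size of the context. -/
theorem impIR_aux (A B : Fm) :
    ∀ n (Γ : List Fm), (Γ.map Fm.size).sum < n → (∀ C ∈ Γ, Fm.IsJ C) →
      Der (A :: Γ) [B] → Der Γ [.impI A B] := by
  intro n
  induction n with
  | zero => intro Γ h; omega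
  | succ n IH =>
    intro Γ hsize hJ h
    by_cases hp : ∀ C ∈ Γ, Fm.Persistent C
    · exact Der.impIR hp h
    · push_neg at hp
      obtain ⟨C, hCmem, hCnp⟩ := hp
      have hperm : Γ.Perm (C :: Γ.erase C) := List.perm_cons_erase hCmem
      set Γ' := Γ.erase C with hΓ'
      have hJ' : ∀ C' ∈ (C :: Γ'), Fm.IsJ C' := fun C' hm => hJ C' (hperm.mem_iff.2 hm)
      have hJΓ' : ∀ C' ∈ Γ', Fm.IsJ C' := fun C' hm => hJ' C' (List.mem_cons_of_mem _ hm)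
      have hJC : Fm.IsJ C := hJ' C (List.mem_cons_self)
      have hsum : (Γ.map Fm.size).sum = ((C :: Γ').map Fm.size).sum :=
        (hperm.map Fm.size).sum_eq
      have h' : Der (A :: C :: Γ') [B] :=
        Der.perm (hperm.cons A) (List.Perm.refl _) h
      have hfin : Der (C :: Γ') [.impI A B] → Der Γ [.impI A B] :=
        fun hd => Der.perm hperm.symm (List.Perm.refl _) hd
      cases C with
      | atom P ts => exact absurd trivial hCnp
      | impI D E => exact absurd trivial hCnp
      | allI x D => exact absurd trivial hCnp
      | impC D E => exact absurd hJC (by simp [Fm.IsJ])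
      | allC x D => exact absurd hJC (by simp [Fm.IsJ])
      | bot =>
        apply hfin
        have b1 : Der [Fm.bot] [.impI A B] := Der.wR _ Der.botL
        have b2 : Der (Γ' ++ [Fm.bot]) [.impI A B] := by
          have := Der.wLs Γ' b1
          simpa using this
        exact Der.perm (List.perm_append_singleton _ _) (List.Perm.refl _) b2
      | and D E =>
        obtain ⟨hJD, hJE⟩ := hJC
        have step2 : Der (Fm.and D E :: A :: Γ') [B] :=
          Der.perm (List.Perm.swap _ A Γ') (List.Perm.refl _) h'
        have step3 : Der (D :: E :: A :: Γ') [B] := Der.cut (Der.pairAnd D E) step2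
        have step3' : Der (A :: D :: E :: Γ') [B] :=
          Der.perm (((List.Perm.swap A E Γ').cons D).trans (List.Perm.swap A D (E :: Γ')))
            (List.Perm.refl _) step3
        have hsz : ((D :: E :: Γ').map Fm.size).sum < n := by
          simp [Fm.size] at hsum ⊢
          omega
        have step4 : Der (D :: E :: Γ') [.impI A B] := by
          apply IH _ hsz _ step3'
          intro C' hm
          rcases List.mem_cons.1 hm with h1 | hm
          · subst h1; exact hJD
          rcases List.mem_cons.1 hm with h1 | hm
          · subst h1; exact hJE
          · exact hJΓ' _ hm
        apply hfin
        have s1 : Der (E :: D :: Γ') [.impI A B] :=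
          Der.perm (List.Perm.swap E D Γ') (List.Perm.refl _) step4
        have s2 : Der (Fm.and D E :: D :: Γ') [.impI A B] := Der.andL2 s1
        have s3 : Der (D :: Fm.and D E :: Γ') [.impI A B] :=
          Der.perm (List.Perm.swap D (Fm.and D E) Γ') (List.Perm.refl _) s2
        have s4 : Der (Fm.and D E :: Fm.and D E :: Γ') [.impI A B] := Der.andL1 s3
        exact Der.cL s4
      | or D E =>
        obtain ⟨hJD, hJE⟩ := hJC
        have step2 : Der (Fm.or D E :: A :: Γ') [B] :=
          Der.perm (List.Perm.swap _ A Γ') (List.Perm.refl _) h'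
        have cutD : Der (D :: A :: Γ') [B] := Der.cut (Der.orR1 (Der.id D)) step2
        have cutE : Der (E :: A :: Γ') [B] := Der.cut (Der.orR2 (Der.id E)) step2
        have cutD' : Der (A :: D :: Γ') [B] :=
          Der.perm (List.Perm.swap A D Γ') (List.Perm.refl _) cutD
        have cutE' : Der (A :: E :: Γ') [B] :=
          Der.perm (List.Perm.swap A E Γ') (List.Perm.refl _) cutE
        have hszD : ((D :: Γ').map Fm.size).sum < n := by
          simp [Fm.size] at hsum ⊢; omega
        have hszE : ((E :: Γ').map Fm.size).sum < n := by
          simp [Fm.size] at hsum ⊢; omega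
        have dD : Der (D :: Γ') [.impI A B] := by
          apply IH _ hszD _ cutD'
          intro C' hm
          rcases List.mem_cons.1 hm with h1 | hm
          · subst h1; exact hJD
          · exact hJΓ' _ hm
        have dE : Der (E :: Γ') [.impI A B] := by
          apply IH _ hszE _ cutE'
          intro C' hm
          rcases List.mem_cons.1 hm with h1 | hm
          · subst h1; exact hJE
          · exact hJΓ' _ hm
        exact hfin (Der.orL dD dE)
      | ex x D =>
        have hJD : Fm.IsJ D := hJC
        set z := ((A :: B :: D :: Γ').map Fm.vbd).foldr max 0 with hz
        have hle : ∀ C' ∈ (A :: B :: D :: Γ'), Fm.vbd C' ≤ z := fun C' hm =>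
          le_foldr_max (List.mem_map_of_mem (f := Fm.vbd) hm)
        have hzA : z ∉ A.fv :=
          Fm.notMem_fv_of_vbd_le (hle A (by simp))
        have hzB : z ∉ B.fv :=
          Fm.notMem_fv_of_vbd_le (hle B (by simp))
        have hzDfv : z ∉ D.fv :=
          Fm.notMem_fv_of_vbd_le (hle D (by simp))
        have hzDbv : z ∉ D.bv :=
          Fm.notMem_bv_of_vbd_le (hle D (by simp))
        have hzΓ' : ∀ C' ∈ Γ', z ∉ C'.fv := fun C' hm =>
          Fm.notMem_fv_of_vbd_le (hle C' (by simp [hm]))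
        have step1 : Der [D.subst x (.var z)] [.ex x D] := by
          apply Der.exR (.var z) _ (Der.id _)
          intro y hy
          have : y = z := by simpa [Tm.fv] using hy
          subst this; exact hzDbv
        have step2 : Der (Fm.ex x D :: A :: Γ') [B] :=
          Der.perm (List.Perm.swap _ A Γ') (List.Perm.refl _) h'
        have step3 : Der (D.subst x (.var z) :: A :: Γ') [B] := Der.cut step1 step2
        have step3' : Der (A :: D.subst x (.var z) :: Γ') [B] :=
          Der.perm (List.Perm.swap A _ Γ') (List.Perm.refl _) step3
        have hsz : ((D.subst x (.var z) :: Γ').map Fm.size).sum < n := by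
          simp [Fm.size, Fm.size_subst] at hsum ⊢; omega
        have step4 : Der (D.subst x (.var z) :: Γ') [.impI A B] := by
          apply IH _ hsz _ step3'
          intro C' hm
          rcases List.mem_cons.1 hm with h1 | hm
          · subst h1; exact hJD.subst x (.var z)
          · exact hJΓ' _ hm
        apply hfin
        apply Der.exL hzΓ' _ _ hzDbv step4
        · intro C' hm
          have : C' = Fm.impI A B := by simpa using hm
          subst this
          intro hc
          rcases hc with hc | hc
          · exact hzA hc
          · exact hzB hc
        · intro hc
          exact hzDfv hc.1

/-- the unrestricted right rule for →ᵢ is admissible when the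
context consists only of purely intuitionistic formulas. -/
theorem impIR_unrestricted_admissible (Γ : List Fm) (A B : Fm)
    (hΓ : ∀ C ∈ Γ, Fm.IsJ C)
    (h : Der (A :: Γ) [B]) : Der Γ [.impI A B] :=
  impIR_aux A B ((Γ.map Fm.size).sum + 1) Γ (Nat.lt_succ_self _) hΓ h
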